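/- Let u, z be words over {a,b}, and let w₁ = u·a and w₂ = u·b. Then m(w̄₁·a·z·b·w₂) = m(w̄₁·b·z̄·a·w₂), i.e. m(ā·ū·a·z·b·u·b) = m(ā·ū·b·z̄·a·u·b) where ā = a; explicitly: m(a·ū·a·z·b·u·b) = m(a·ū·b·z̄·a·u·b). -/
import Mathlib


def A : Matrix (Fin 2) (Fin 2) ℤ := !![1,1;1,2]
def B : Matrix (Fin 2) (Fin 2) ℤ := !![2,1;1,1]
/-- matrix of a word: `false` is the letter `a`, `true` is the letter `b` -/
def Mw (w : List Bool) : Matrix (Fin 2) (Fin 2) ℤ :=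
  (w.map (fun x => if x then B else A)).prod
/-- the m-value: the top-right entry -/
def mval (w : List Bool) : ℤ := Mw w 0 1
def U : Matrix (Fin 2) (Fin 2) ℤ := !![0,-1;1,0]
def J : Matrix (Fin 2) (Fin 2) ℤ := !![0,1;1,0]
/-- reversal with letters exchanged -/
def Ebar (w : List Bool) : List Bool := (w.map (fun x => !x)).reverse
def pell : ℕ → ℕ
  | 0 => 0
  | 1 => 1
  | n+2 => 2 * pell (n+1) + pell n

open Matrix in
lemma Mw_append (x y : List Bool) : Mw (x ++ y) = Mw x * Mw y := by
  simp [Mw]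

open Matrix in
lemma Mw_reverse (w : List Bool) : Mw w.reverse = (Mw w)ᵀ := by
  induction w with
  | nil => simp [Mw]
  | cons c t ih =>
      have : Mw (c :: t) = (if c then B else A) * Mw t := by
        simp [Mw]
      have hAT : Aᵀ = A := by decide
      have hBT : Bᵀ = B := by decide
      rw [List.reverse_cons, Mw_append, ih, this, Matrix.transpose_mul]
      cases c <;> simp [Mw, hAT, hBT]

open Matrix in
lemma key (M Z : Matrix (Fin 2) (Fin 2) ℤ) :
    ((M * A)ᵀ * A * Z * B * (M * B)) 0 1 =
    ((M * A)ᵀ * B * Zᵀ * A * (M * B)) 0 1 := by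
  simp [Matrix.mul_apply, Fin.sum_univ_succ, A, B, Matrix.transpose_apply]
  ring

open Matrix in
theorem stmt11 (u z : List Bool) :
    mval ((u ++ [false]).reverse ++ [false] ++ z ++ [true] ++ (u ++ [true])) =
    mval ((u ++ [false]).reverse ++ [true] ++ z.reverse ++ [false] ++ (u ++ [true])) := by
  have hA : Mw [false] = A := by simp [Mw]
  have hB : Mw [true] = B := by simp [Mw]
  simp only [mval, Mw_append, Mw_reverse, hA, hB]
  have := key (Mw u) (Mw z)
  simpa [Matrix.transpose_mul, mul_assoc] using this
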